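/- Let i, j ∈ ℕ and set r = ρ + i and r′ = −ρ′ − j. Then the ℂ-vector space of admissible solutions t for (r, r′) satisfying additionally t(α, α′) = 0 whenever α > i or α′ > j has dimension 1 if i − j ∈ 2ℕ, and dimension 0 otherwise. -/
import Mathlib


noncomputable section

/-- ρ = (n-1)/2 as a complex number. -/
def rho (n : ℕ) : ℂ := ((n : ℂ) - 1) / 2

/-- ρ' = (n-2)/2 as a complex number. -/
def rho' (n : ℕ) : ℂ := ((n : ℂ) - 2) / 2

/-- A diagonal sequence for `(r, r')`. -/
def IsDiagSeq (n : ℕ) (r r' : ℂ) (s : ℕ → ℂ) : Prop :=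
  ∀ α : ℕ, (2*r' + 2*(α : ℂ) + (n : ℂ) - 2) * s α
    = (2*r + 2*(α : ℂ) + (n : ℂ) - 1) * s (α + 1)

/-- L_even. -/
def Leven (n : ℕ) : Set (ℂ × ℂ) :=
  {p | ∃ i j : ℕ, p.1 = -rho n - (i : ℂ) ∧ p.2 = -rho' n - (j : ℂ) ∧ ∃ k : ℕ, i = j + 2*k}

/-- L_odd. -/
def Lodd (n : ℕ) : Set (ℂ × ℂ) :=
  {p | ∃ i j : ℕ, p.1 = -rho n - (i : ℂ) ∧ p.2 = -rho' n - (j : ℂ) ∧ ∃ k : ℕ, i = j + 2*k + 1}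

/-- An admissible solution `t : ℕ × ℕ → ℂ` for `(r, r')`:
`t(α,α') = 0` when `α' > α` or `α − α'` is odd (equivalently `α + α'` is odd),
and the relations (R1), (R2) hold for all `α ≥ α'` with `α − α'` even.
The natural-subtraction index `α - 1` is harmless, since in (R1) its coefficient
`(α − α')` vanishes when `α = α'`, and in (R2) we have `α ≥ α' ≥ 1`. -/
def IsAdmissible (n : ℕ) (r r' : ℂ) (t : ℕ → ℕ → ℂ) : Prop :=
  (∀ α α' : ℕ, (α < α' ∨ Odd (α + α')) → t α α' = 0) ∧
  (∀ α α' : ℕ, α' ≤ α → Even (α + α') →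
    ((2*(α : ℂ) + (n : ℂ) - 2) * (2*r' + 2*(α' : ℂ) + (n : ℂ) - 2) * t α α'
      = ((α : ℂ) + (α' : ℂ) + (n : ℂ) - 2) * (2*r + 2*(α : ℂ) + (n : ℂ) - 1)
          * t (α + 1) (α' + 1)
        + ((α : ℂ) - (α' : ℂ)) * (2*r - 2*(α : ℂ) - (n : ℂ) + 3)
          * t (α - 1) (α' + 1)) ∧
    (1 ≤ α' →
      (2*(α : ℂ) + (n : ℂ) - 2) * (2*r' - 2*(α' : ℂ) - (n : ℂ) + 4) * t α α'
      = ((α : ℂ) - (α' : ℂ) + 1) * (2*r + 2*(α : ℂ) + (n : ℂ) - 1)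
          * t (α + 1) (α' - 1)
        + ((α : ℂ) + (α' : ℂ) + (n : ℂ) - 3) * (2*r - 2*(α : ℂ) - (n : ℂ) + 3)
          * t (α - 1) (α' - 1)))

/-- The ℂ-vector space of admissible solutions for `(r, r')`. -/
def admSub (n : ℕ) (r r' : ℂ) : Submodule ℂ (ℕ → ℕ → ℂ) where
  carrier := {t | IsAdmissible n r r' t}
  add_mem' := by
    intro a b ha hb
    obtain ⟨ha0, haR⟩ := ha
    obtain ⟨hb0, hbR⟩ := hb
    refine ⟨fun α α' h => ?_, fun α α' h1 h2 => ⟨?_, fun h3 => ?_⟩⟩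
    · simp [Pi.add_apply, ha0 α α' h, hb0 α α' h]
    · simp only [Pi.add_apply]
      linear_combination (haR α α' h1 h2).1 + (hbR α α' h1 h2).1
    · simp only [Pi.add_apply]
      linear_combination (haR α α' h1 h2).2 h3 + (hbR α α' h1 h2).2 h3
  zero_mem' := by
    refine ⟨fun _ _ _ => rfl, fun α α' h1 h2 => ⟨by simp, fun _ => by simp⟩⟩
  smul_mem' := by
    intro c t ht
    obtain ⟨ht0, htR⟩ := ht
    refine ⟨fun α α' h => ?_, fun α α' h1 h2 => ⟨?_, fun h3 => ?_⟩⟩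
    · simp [Pi.smul_apply, ht0 α α' h]
    · simp only [Pi.smul_apply, smul_eq_mul]
      linear_combination c * (htR α α' h1 h2).1
    · simp only [Pi.smul_apply, smul_eq_mul]
      linear_combination c * (htR α α' h1 h2).2 h3

/-- Families vanishing whenever `α > i` or `α' > j`. -/
def vanSub (i j : ℕ) : Submodule ℂ (ℕ → ℕ → ℂ) where
  carrier := {t | ∀ α α' : ℕ, (i < α ∨ j < α') → t α α' = 0}
  add_mem' := by
    intro a b ha hb α α' h
    simp [Pi.add_apply, ha α α' h, hb α α' h]
  zero_mem' := fun _ _ _ => rfl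
  smul_mem' := by
    intro c t ht α α' h
    simp [Pi.smul_apply, ht α α' h]



namespace SB6

lemma ne_zero_of_eq {x y : ℂ} (h : y ≠ 0) (e : x = y) : x ≠ 0 := by rw [e]; exact h

lemma cast_lt_ne (a b : ℕ) (h : b < a) : (a:ℂ) - (b:ℂ) ≠ 0 :=
  sub_ne_zero.mpr (by exact_mod_cast h.ne')

lemma cast_gt_ne (a b : ℕ) (h : a < b) : (a:ℂ) - (b:ℂ) ≠ 0 :=
  sub_ne_zero.mpr (by exact_mod_cast h.ne)

lemma cast_pos_ne (m : ℕ) (h : 0 < m) : (m:ℂ) ≠ 0 := Nat.cast_ne_zero.mpr h.ne'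

/-- single factor of the column-j hypergeometric product -/
def fpSB (n i j m : ℕ) : ℂ :=
  (-(((i:ℂ) - 2*(m:ℂ) - 1 - (j:ℂ)) * ((n:ℂ) + 2*(i:ℂ) - 2*(m:ℂ) - 2))) /
    (((i:ℂ) - 2*(m:ℂ) + (j:ℂ) + (n:ℂ) - 3) * (2*(m:ℂ) + 2))

/-- the column β = j -/
def scSB (n i j : ℕ) (γ : ℕ) : ℂ :=
  if γ < j ∨ i < γ ∨ (γ + j) % 2 = 1 then 0
  else ∏ m ∈ Finset.range ((i - γ)/2), fpSB n i j m

lemma sc_lt {n i j γ : ℕ} (h : γ < j) : scSB n i j γ = 0 := by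
  simp only [scSB]; rw [if_pos (Or.inl h)]

lemma sc_gt {n i j γ : ℕ} (h : i < γ) : scSB n i j γ = 0 := by
  simp only [scSB]; rw [if_pos (Or.inr (Or.inl h))]

lemma sc_odd {n i j γ : ℕ} (h : Odd (γ + j)) : scSB n i j γ = 0 := by
  rw [Nat.odd_iff] at h
  simp only [scSB]; rw [if_pos (Or.inr (Or.inr h))]

lemma sc_top {n i j : ℕ} (hj : j ≤ i) (hpar : Even (i + j)) : scSB n i j i = 1 := by
  rw [Nat.even_iff] at hpar
  simp only [scSB]
  rw [if_neg (by omega), Nat.sub_self]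
  simp

lemma sc_step {n i j γ : ℕ} (hn : 3 ≤ n) (hj : j ≤ γ) (h2 : γ + 2 ≤ i)
    (hpar : Even (γ + j)) (hiγ : Even (i + γ)) :
    ((γ:ℂ) + (j:ℂ) + (n:ℂ) - 1) * ((i:ℂ) - (γ:ℂ)) * scSB n i j γ
      = -(((γ:ℂ) + 1 - (j:ℂ)) * ((n:ℂ) + (i:ℂ) + (γ:ℂ))) * scSB n i j (γ + 2) := by
  rw [Nat.even_iff] at hpar hiγ
  obtain ⟨K, rfl⟩ : ∃ K, i = γ + 2 + 2*K := ⟨(i - γ - 2)/2, by omega⟩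
  simp only [scSB]
  rw [if_neg (by omega), if_neg (by omega)]
  rw [show (γ + 2 + 2*K - γ)/2 = K + 1 by omega, show (γ + 2 + 2*K - (γ+2))/2 = K by omega,
    Finset.prod_range_succ]
  have hDEN : (((γ + 2 + 2*K : ℕ):ℂ) - 2*(K:ℂ) + (j:ℂ) + (n:ℂ) - 3) * (2*(K:ℂ) + 2) ≠ 0 := by
    apply mul_ne_zero
    · exact ne_zero_of_eq (cast_lt_ne (γ+j+n) 1 (by omega)) (by push_cast; ring)
    · exact ne_zero_of_eq (cast_pos_ne (2*K+2) (by omega)) (by push_cast; ring)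
  have hfp : (((γ:ℂ) + (j:ℂ) + (n:ℂ) - 1) * (((γ + 2 + 2*K : ℕ):ℂ) - (γ:ℂ)))
      * fpSB n (γ + 2 + 2*K) j K
      = -(((γ:ℂ) + 1 - (j:ℂ)) * ((n:ℂ) + ((γ + 2 + 2*K : ℕ):ℂ) + (γ:ℂ))) := by
    simp only [fpSB]
    rw [mul_comm, div_mul_eq_mul_div, div_eq_iff hDEN]
    push_cast
    ring
  push_cast at hfp ⊢
  linear_combination (∏ m ∈ Finset.range K, fpSB n (γ + 2 + 2*K) j m) * hfp


/-- columns β = j - d, built by downward R1-recursion -/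
def uuSB (n i j : ℕ) : ℕ → ℕ → ℂ
  | 0 => scSB n i j
  | (d+1) => fun α =>
      (((α:ℂ) + ((j - (d+1) : ℕ):ℂ) + (n:ℂ) - 2) * (2*((n:ℂ) - 1 + (i:ℂ) + (α:ℂ)))
          * uuSB n i j d (α+1)
        + ((α:ℂ) - ((j - (d+1) : ℕ):ℂ)) * (2*((i:ℂ) - (α:ℂ) + 1)) * uuSB n i j d (α-1))
      / ((2*(α:ℂ) + (n:ℂ) - 2) * (2*(((j - (d+1) : ℕ):ℂ) - (j:ℂ))))

/-- the candidate solution -/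
def t0SB (n i j : ℕ) : ℕ → ℕ → ℂ := fun α β => if j < β then 0 else uuSB n i j (j - β) α

lemma uu_gt (n i j : ℕ) : ∀ d α, i < α → uuSB n i j d α = 0 := by
  intro d
  induction d with
  | zero => intro α h; exact sc_gt h
  | succ d ih =>
    intro α h
    simp only [uuSB]
    rw [ih (α+1) (by omega)]
    rcases Nat.lt_or_ge i (α-1) with h'|h'
    · rw [ih (α-1) h']; simp
    · obtain rfl : α = i + 1 := by omega
      rw [div_eq_zero_iff]; left; push_cast; ring

lemma uu_lt (n i j : ℕ) : ∀ d α, α < j - d → uuSB n i j d α = 0 := by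
  intro d
  induction d with
  | zero => intro α h; exact sc_lt h
  | succ d ih =>
    intro α h
    simp only [uuSB]
    rw [ih (α+1) (by omega), ih (α-1) (by omega)]
    simp

lemma uu_odd (n i j : ℕ) : ∀ d, d ≤ j → ∀ α, Odd (α + (j - d)) → uuSB n i j d α = 0 := by
  intro d
  induction d with
  | zero => intro _ α h; exact sc_odd (by simpa using h)
  | succ d ih =>
    intro hd α hodd
    rw [Nat.odd_iff] at hodd
    simp only [uuSB]
    rw [ih (by omega) (α+1) (by rw [Nat.odd_iff]; omega)]
    have h2 : uuSB n i j d (α-1) = 0 := by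
      rcases Nat.eq_zero_or_pos α with rfl|h0
      · exact uu_lt n i j d (0-1) (by omega)
      · exact ih (by omega) (α-1) (by rw [Nat.odd_iff]; omega)
    rw [h2]; simp

lemma t0_le {n i j α β : ℕ} (h : β ≤ j) : t0SB n i j α β = uuSB n i j (j - β) α := by
  simp only [t0SB]; rw [if_neg (by omega)]

lemma t0_gtj {n i j α β : ℕ} (h : j < β) : t0SB n i j α β = 0 := by
  simp only [t0SB]; rw [if_pos h]

lemma t0_gti {n i j α β : ℕ} (h : i < α) : t0SB n i j α β = 0 := by
  rcases Nat.lt_or_ge j β with h'|h'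
  · exact t0_gtj h'
  · rw [t0_le h']; exact uu_gt n i j _ α h

lemma t0_ltd {n i j α β : ℕ} (h : α < β) : t0SB n i j α β = 0 := by
  rcases Nat.lt_or_ge j β with h'|h'
  · exact t0_gtj h'
  · rw [t0_le h']; exact uu_lt n i j _ α (by omega)

lemma t0_odd {n i j α β : ℕ} (h : Odd (α + β)) : t0SB n i j α β = 0 := by
  rcases Nat.lt_or_ge j β with h'|h'
  · exact t0_gtj h'
  · rw [t0_le h']
    exact uu_odd n i j (j-β) (by omega) α (by rw [show j - (j-β) = β from by omega]; exact h)

lemma t0_top {n i j : ℕ} (hj : j ≤ i) (hpar : Even (i + j)) : t0SB n i j i j = 1 := by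
  rw [t0_le le_rfl, Nat.sub_self]
  exact sc_top hj hpar

lemma uu_succ (n i j : ℕ) (hn : 3 ≤ n) {d : ℕ} (hd : d + 1 ≤ j) (α : ℕ) :
    (2*(α:ℂ) + (n:ℂ) - 2) * (2*(((j - (d+1) : ℕ):ℂ) - (j:ℂ))) * uuSB n i j (d+1) α
      = ((α:ℂ) + ((j - (d+1) : ℕ):ℂ) + (n:ℂ) - 2) * (2*((n:ℂ) - 1 + (i:ℂ) + (α:ℂ)))
          * uuSB n i j d (α+1)
        + ((α:ℂ) - ((j - (d+1) : ℕ):ℂ)) * (2*((i:ℂ) - (α:ℂ) + 1)) * uuSB n i j d (α-1) := by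
  have hD : (2*(α:ℂ) + (n:ℂ) - 2) * (2*(((j - (d+1) : ℕ):ℂ) - (j:ℂ))) ≠ 0 := by
    apply mul_ne_zero
    · exact ne_zero_of_eq (cast_lt_ne (2*α+n) 2 (by omega)) (by push_cast; ring)
    · exact mul_ne_zero two_ne_zero (cast_gt_ne _ _ (by omega))
  simp only [uuSB]
  rw [mul_comm, div_mul_cancel₀ _ hD]

lemma t0_R1 (n i j : ℕ) (hn : 3 ≤ n) {β : ℕ} (hβ : β < j) (α : ℕ) :
    (2*(α:ℂ) + (n:ℂ) - 2) * (2*((β:ℂ) - (j:ℂ))) * t0SB n i j α β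
      = ((α:ℂ) + (β:ℂ) + (n:ℂ) - 2) * (2*((n:ℂ) - 1 + (i:ℂ) + (α:ℂ))) * t0SB n i j (α+1) (β+1)
        + ((α:ℂ) - (β:ℂ)) * (2*((i:ℂ) - (α:ℂ) + 1)) * t0SB n i j (α-1) (β+1) := by
  have h1 : t0SB n i j α β = uuSB n i j (j-β) α := t0_le (by omega)
  have h2 : ∀ γ, t0SB n i j γ (β+1) = uuSB n i j (j-β-1) γ := fun γ => by
    rw [t0_le (by omega : β + 1 ≤ j)]
    simp only [show j - (β+1) = j - β - 1 from by omega]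
  have e := uu_succ n i j hn (d := j-β-1) (by omega) α
  rw [show j - (j - β - 1 + 1) = β from by omega] at e
  rw [show j - β - 1 + 1 = j - β from by omega] at e
  rw [h1, h2, h2]
  exact e


lemma t0_R2E (n i j : ℕ) (hn : 3 ≤ n) (k : ℕ) (hk : i = j + 2*k) :
    ∀ d α β, β = j + 1 - d → 1 ≤ β → β ≤ α → Even (α + β) →
      (2*(α:ℂ) + (n:ℂ) - 2) * (2*(3 - (n:ℂ) - (j:ℂ) - (β:ℂ))) * t0SB n i j α β
        = ((α:ℂ) - (β:ℂ) + 1) * (2*((n:ℂ) - 1 + (i:ℂ) + (α:ℂ))) * t0SB n i j (α+1) (β-1)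
          + ((α:ℂ) + (β:ℂ) + (n:ℂ) - 3) * (2*((i:ℂ) - (α:ℂ) + 1)) * t0SB n i j (α-1) (β-1) := by
  intro d
  induction d with
  | zero =>
    intro α β hβd hβ1 hβα hpar
    obtain rfl : β = j + 1 := by omega
    rw [t0_gtj (by omega : j < j + 1)]
    simp only [Nat.add_sub_cancel]
    rcases (show i + 1 < α ∨ α = i + 1 ∨ α ≤ i from by omega) with hc|hc|hc
    · rw [t0_gti (by omega : i < α + 1), t0_gti (by omega : i < α - 1)]; ring
    · subst hc
      rw [t0_gti (by omega : i < i + 1 + 1)]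
      push_cast
      ring
    · have hαi : α < i := by
        rw [Nat.even_iff] at hpar; omega
      have hs1 : t0SB n i j (α+1) j = scSB n i j (α+1) := by
        rw [t0_le le_rfl, Nat.sub_self]; rfl
      have hs2 : t0SB n i j (α-1) j = scSB n i j (α-1) := by
        rw [t0_le le_rfl, Nat.sub_self]; rfl
      have hstep := sc_step (n := n) (i := i) (j := j) (γ := α-1) hn (by omega) (by omega)
        (by rw [Nat.even_iff] at hpar ⊢; omega) (by rw [Nat.even_iff] at hpar ⊢; omega)
      rw [show α - 1 + 2 = α + 1 from by omega] at hstep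
      rw [Nat.cast_sub (show 1 ≤ α from by omega), Nat.cast_one] at hstep
      rw [hs1, hs2]
      push_cast
      linear_combination (-2 : ℂ) * hstep
  | succ d ih =>
    intro α β hβd hβ1 hβα hpar
    have hβj : β ≤ j := by omega
    have hE1 : (2*(α:ℂ) + (n:ℂ) - 2) * (2*((β:ℂ) - (j:ℂ))) * t0SB n i j α β
        = ((α:ℂ) + (β:ℂ) + (n:ℂ) - 2) * (2*((n:ℂ) - 1 + (i:ℂ) + (α:ℂ))) * t0SB n i j (α+1) (β+1)
          + ((α:ℂ) - (β:ℂ)) * (2*((i:ℂ) - (α:ℂ) + 1)) * t0SB n i j (α-1) (β+1) := by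
      rcases Nat.lt_or_ge β j with h|h
      · exact t0_R1 n i j hn h α
      · have hb : β = j := by omega
        rw [hb, t0_gtj (by omega : j < j + 1), t0_gtj (by omega : j < j + 1)]
        ring
    have hE4 := ih (α+1) (β+1) (by omega) (by omega) (by omega)
      (by rw [Nat.even_iff] at hpar ⊢; omega)
    rcases (show α = β ∨ β + 2 ≤ α from by rw [Nat.even_iff] at hpar; omega) with hc|hc
    · subst hc
      obtain ⟨c, rfl⟩ : ∃ c, α = c + 1 := ⟨α - 1, by omega⟩
      have hE2 := t0_R1 n i j hn (show c < j from by omega) (c+2)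
      have hE3 := t0_R1 n i j hn (show c < j from by omega) c
      simp only [show c+1-1 = c from by omega, show c+1+1 = c+2 from by omega,
        show c+2+1 = c+3 from by omega, show c+2-1 = c+1 from by omega]
        at hE1 hE2 hE3 hE4 ⊢
      push_cast at hE1 hE2 hE3 hE4 ⊢
      have hD : ((2*(c:ℂ)+(n:ℂ)+2) * ((2*(c:ℂ)+(n:ℂ)-2) * (2*((c:ℂ) - (j:ℂ))))) ≠ 0 := by
        apply mul_ne_zero
        · exact ne_zero_of_eq (cast_pos_ne (2*c+n+2) (by omega)) (by push_cast; ring)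
        apply mul_ne_zero
        · exact ne_zero_of_eq (cast_lt_ne (2*c+n) 2 (by omega)) (by push_cast; ring)
        · exact mul_ne_zero two_ne_zero (cast_gt_ne c j (by omega))
      apply mul_left_cancel₀ hD
      linear_combination
        ((2*(c:ℂ)+(n:ℂ)+2)*(2*(c:ℂ)+(n:ℂ)-2)*(2*(1-(n:ℂ)-(j:ℂ)-(c:ℂ)))) * hE1
        + (-(2*((n:ℂ)+(i:ℂ)+(c:ℂ)))*(2*(c:ℂ)+(n:ℂ)-2)) * hE2
        + (-(2*(c:ℂ)+(n:ℂ)-1)*(2*((i:ℂ)-(c:ℂ)))*(2*(c:ℂ)+(n:ℂ)+2)) * hE3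
        + ((2*(c:ℂ)+(n:ℂ))*(2*((n:ℂ)+(i:ℂ)+(c:ℂ)))*(2*(c:ℂ)+(n:ℂ)-2)) * hE4
    · obtain ⟨c, rfl⟩ : ∃ c, β = c + 1 := ⟨β - 1, by omega⟩
      obtain ⟨a, rfl⟩ : ∃ a, α = a + 2 := ⟨α - 2, by omega⟩
      have hE2 := t0_R1 n i j hn (show c < j from by omega) (a+3)
      have hE3 := t0_R1 n i j hn (show c < j from by omega) (a+1)
      have hE5 := ih (a+1) (c+2) (by omega) (by omega) (by omega)
        (by rw [Nat.even_iff] at hpar ⊢; omega)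
      simp only [show a+2-1 = a+1 from by omega, show a+3-1 = a+2 from by omega,
        show a+1-1 = a from by omega, show a+2+1 = a+3 from by omega,
        show a+3+1 = a+4 from by omega, show a+1+1 = a+2 from by omega,
        show c+1-1 = c from by omega, show c+1+1 = c+2 from by omega,
        show c+2-1 = c+1 from by omega] at hE1 hE2 hE3 hE4 hE5 ⊢
      push_cast at hE1 hE2 hE3 hE4 hE5 ⊢
      have hD : ((2*(a:ℂ)+(n:ℂ)+4) * ((2*(a:ℂ)+(n:ℂ)) * (2*((c:ℂ) - (j:ℂ))))) ≠ 0 := by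
        apply mul_ne_zero
        · exact ne_zero_of_eq (cast_pos_ne (2*a+n+4) (by omega)) (by push_cast; ring)
        apply mul_ne_zero
        · exact ne_zero_of_eq (cast_pos_ne (2*a+n) (by omega)) (by push_cast; ring)
        · exact mul_ne_zero two_ne_zero (cast_gt_ne c j (by omega))
      apply mul_left_cancel₀ hD
      linear_combination
        ((2*(a:ℂ)+(n:ℂ)+4)*(2*(a:ℂ)+(n:ℂ))*(2*(1-(n:ℂ)-(j:ℂ)-(c:ℂ)))) * hE1
        + (-((a:ℂ)-(c:ℂ)+2)*(2*((n:ℂ)+1+(i:ℂ)+(a:ℂ)))*(2*(a:ℂ)+(n:ℂ))) * hE2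
        + (-((a:ℂ)+(c:ℂ)+(n:ℂ))*(2*((i:ℂ)-(a:ℂ)-1))*(2*(a:ℂ)+(n:ℂ)+4)) * hE3
        + (((a:ℂ)+(c:ℂ)+(n:ℂ)+1)*(2*((n:ℂ)+1+(i:ℂ)+(a:ℂ)))*(2*(a:ℂ)+(n:ℂ))) * hE4
        + (((a:ℂ)-(c:ℂ)+1)*(2*((i:ℂ)-(a:ℂ)-1))*(2*(a:ℂ)+(n:ℂ)+4)) * hE5

end SB6

namespace SB6

lemma t0_adm (n i j : ℕ) (hn : 3 ≤ n) (k : ℕ) (hk : i = j + 2*k) :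
    IsAdmissible n (rho n + (i:ℂ)) (-rho' n - (j:ℂ)) (t0SB n i j) := by
  constructor
  · intro α β h
    rcases h with h|h
    · exact t0_ltd h
    · exact t0_odd h
  · intro α β hβα hpar
    constructor
    · -- R1
      rcases Nat.lt_trichotomy β j with h|h|h
      · have e := t0_R1 n i j hn h α
        simp only [rho, rho']
        linear_combination e
      · rw [h, t0_gtj (by omega : j < j + 1), t0_gtj (by omega : j < j + 1)]
        simp only [rho']
        ring
      · rw [t0_gtj h, t0_gtj (by omega : j < β + 1), t0_gtj (by omega : j < β + 1)]
        ring
    · intro hβ1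
      rcases (show β ≤ j + 1 ∨ j + 1 < β from by omega) with h|h
      · have e := t0_R2E n i j hn k hk (j + 1 - β) α β (by omega) hβ1 hβα hpar
        simp only [rho, rho']
        linear_combination e
      · rw [t0_gtj (by omega : j < β), t0_gtj (show j < β - 1 from by omega),
          t0_gtj (show j < β - 1 from by omega)]
        ring

lemma uniq (n i j : ℕ) (hn : 3 ≤ n) (t : ℕ → ℕ → ℂ)
    (hadm : IsAdmissible n (rho n + (i:ℂ)) (-rho' n - (j:ℂ)) t)
    (hvan : ∀ α β : ℕ, i < α ∨ j < β → t α β = 0)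
    (h0 : t i j = 0) : t = 0 := by
  obtain ⟨hz, hrel⟩ := hadm
  have hcol : ∀ γ, t γ j = 0 := by
    have key : ∀ m γ, i ≤ γ + m → t γ j = 0 := by
      intro m
      induction m with
      | zero =>
        intro γ hγ
        rcases Nat.lt_or_ge i γ with h|h
        · exact hvan γ j (Or.inl h)
        · have hh : γ = i := by omega
          rw [hh]; exact h0
      | succ m ih =>
        intro γ hγ
        by_cases hgi : i ≤ γ + m
        · exact ih γ hgi
        by_cases h1 : γ < j
        · exact hz γ j (Or.inl h1)
        by_cases h2 : Odd (γ + j)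
        · exact hz γ j (Or.inr h2)
        rw [Nat.odd_iff] at h2
        have hrel2 := (hrel (γ+1) (j+1) (by omega) (by rw [Nat.even_iff]; omega)).2 (by omega)
        simp only [Nat.add_sub_cancel] at hrel2
        rw [hvan (γ+1) (j+1) (Or.inr (by omega)), ih (γ+2) (by omega)] at hrel2
        have hco : (((γ:ℂ) + (j:ℂ) + (n:ℂ) - 1) * (2*((i:ℂ) - (γ:ℂ)))) ≠ 0 :=
          mul_ne_zero (ne_zero_of_eq (cast_lt_ne (γ+j+n) 1 (by omega)) (by push_cast; ring))
            (mul_ne_zero two_ne_zero (cast_lt_ne i γ (by omega)))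
        have hfin : (((γ:ℂ) + (j:ℂ) + (n:ℂ) - 1) * (2*((i:ℂ) - (γ:ℂ)))) * t γ j = 0 := by
          simp only [rho, rho'] at hrel2
          push_cast at hrel2
          linear_combination -hrel2
        rcases mul_eq_zero.mp hfin with h|h
        · exact absurd h hco
        · exact h
    exact fun γ => key i γ (by omega)
  have hall : ∀ d β, j ≤ β + d → β ≤ j → ∀ α, t α β = 0 := by
    intro d
    induction d with
    | zero =>
      intro β hβ hβ' α
      rw [show β = j from by omega]
      exact hcol α
    | succ d ih =>
      intro β hβ hβ' α
      by_cases hd : j ≤ β + d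
      · exact ih β hd hβ' α
      by_cases hβj : j ≤ β
      · rw [show β = j from by omega]; exact hcol α
      by_cases h1 : α < β
      · exact hz α β (Or.inl h1)
      by_cases h2 : Odd (α + β)
      · exact hz α β (Or.inr h2)
      rw [Nat.odd_iff] at h2
      have hrel1 := (hrel α β (by omega) (by rw [Nat.even_iff]; omega)).1
      rw [ih (β+1) (by omega) (by omega) (α+1), ih (β+1) (by omega) (by omega) (α-1)] at hrel1
      have hco : ((2*(α:ℂ) + (n:ℂ) - 2) * (2*((β:ℂ) - (j:ℂ)))) ≠ 0 :=
        mul_ne_zero (ne_zero_of_eq (cast_lt_ne (2*α+n) 2 (by omega)) (by push_cast; ring))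
          (mul_ne_zero two_ne_zero (cast_gt_ne β j (by omega)))
      have hfin : ((2*(α:ℂ) + (n:ℂ) - 2) * (2*((β:ℂ) - (j:ℂ)))) * t α β = 0 := by
        simp only [rho, rho'] at hrel1
        linear_combination hrel1
      rcases mul_eq_zero.mp hfin with h|h
      · exact absurd h hco
      · exact h
  funext α β
  show t α β = 0
  rcases Nat.lt_or_ge j β with h|h
  · exact hvan α β (Or.inr h)
  · exact hall j β (by omega) h α

end SB6

theorem statement6 (n : ℕ) (hn : 3 ≤ n) (i j : ℕ) (r r' : ℂ)
    (hr : r = rho n + (i : ℂ)) (hr' : r' = -rho' n - (j : ℂ)) :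
    ((∃ k : ℕ, i = j + 2*k) →
      Module.finrank ℂ (admSub n r r' ⊓ vanSub i j : Submodule ℂ (ℕ → ℕ → ℂ)) = 1) ∧
    (¬(∃ k : ℕ, i = j + 2*k) →
      Module.finrank ℂ (admSub n r r' ⊓ vanSub i j : Submodule ℂ (ℕ → ℕ → ℂ)) = 0) := by
  subst hr hr'
  constructor
  · rintro ⟨k, hk⟩
    have hmem : SB6.t0SB n i j ∈ (admSub n (rho n + (i:ℂ)) (-rho' n - (j:ℂ)) ⊓ vanSub i j) := by
      rw [Submodule.mem_inf]
      constructor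
      · exact SB6.t0_adm n i j hn k hk
      · intro α β h
        rcases h with h|h
        · exact SB6.t0_gti h
        · exact SB6.t0_gtj h
    have h1 : SB6.t0SB n i j i j = 1 :=
      SB6.t0_top (by omega) (by rw [Nat.even_iff]; omega)
    have hspan : (admSub n (rho n + (i:ℂ)) (-rho' n - (j:ℂ)) ⊓ vanSub i j)
        = ℂ ∙ (SB6.t0SB n i j) := by
      apply le_antisymm
      · intro t ht
        rw [Submodule.mem_span_singleton]
        refine ⟨t i j, ?_⟩
        have hsub : t - t i j • SB6.t0SB n i j
            ∈ (admSub n (rho n + (i:ℂ)) (-rho' n - (j:ℂ)) ⊓ vanSub i j) :=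
          sub_mem ht (Submodule.smul_mem _ _ hmem)
        obtain ⟨hadm', hvan'⟩ := Submodule.mem_inf.mp hsub
        have hz := SB6.uniq n i j hn _ hadm' hvan'
          (by simp [Pi.sub_apply, Pi.smul_apply, smul_eq_mul, h1])
        have := sub_eq_zero.mp hz
        exact this.symm
      · rw [Submodule.span_le, Set.singleton_subset_iff]
        exact hmem
    rw [hspan]
    apply finrank_span_singleton
    intro h
    have := congrFun (congrFun h i) j
    rw [h1] at this
    exact one_ne_zero this
  · intro hno
    have hbot : (admSub n (rho n + (i:ℂ)) (-rho' n - (j:ℂ)) ⊓ vanSub i j)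
        = (⊥ : Submodule ℂ (ℕ → ℕ → ℂ)) := by
      rw [eq_bot_iff]
      intro t ht
      obtain ⟨hadm', hvan'⟩ := Submodule.mem_inf.mp ht
      rw [Submodule.mem_bot]
      apply SB6.uniq n i j hn t hadm' hvan'
      by_cases hij : i < j
      · exact hadm'.1 i j (Or.inl hij)
      · have hodd : Odd (i + j) := by
          rcases Nat.even_or_odd (i + j) with he|ho
          · rw [Nat.even_iff] at he
            exact absurd (⟨(i-j)/2, by omega⟩ : ∃ k, i = j + 2*k) hno
          · exact ho
        exact hadm'.1 i j (Or.inr hodd)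
    rw [hbot]
    exact finrank_bot ℂ (ℕ → ℕ → ℂ)


end
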